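/- Assume B is irreducible. Let M be a real symmetric L×L matrix with 0 ≺ M ≺ B solving the matrix Dyson equation at z = 1, i.e. M^{-1} = B^{-1} + Λ − Diag(λ⊙diag(M)). Then the kernel of Q := I_L − Diag(√λ)(B⊙M)Diag(√λ) is one-dimensional, and it is spanned by the nonzero vector w := √λ ⊙ (𝟙_L − diag(M)). -/

import Mathlib

open Matrix

set_option linter.unusedSectionVars false

section AuxLemmas

variable {n : Type*} [Fintype n] [DecidableEq n]

lemma aux_posdef_conj (S X : Matrix n n ℝ) (hS : S.PosDef) (hX : IsUnit X) :
    (Xᴴ * S * X).PosDef := by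
  refine PosDef.of_dotProduct_mulVec_pos (isHermitian_conjTranspose_mul_mul X hS.1) fun x hx => ?_
  have hx' : X *ᵥ x ≠ 0 := by
    intro h
    exact hx ((Matrix.mulVec_injective_iff_isUnit.2 hX) (by simpa using h))
  simpa only [star_mulVec, dotProduct_mulVec, vecMul_vecMul] using hS.dotProduct_mulVec_pos hx'

lemma aux_posdef_add {A B : Matrix n n ℝ} (hA : A.PosDef) (hB : B.PosDef) : (A + B).PosDef := by
  refine PosDef.of_dotProduct_mulVec_pos (hA.1.add hB.1) fun x hx => ?_
  have := hA.dotProduct_mulVec_pos hx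
  have := hB.dotProduct_mulVec_pos hx
  simp only [add_mulVec, dotProduct_add]
  positivity

lemma aux_trace_transpose_zero (X : Matrix n n ℝ) (h : trace (X * Xᵀ) = 0) : X = 0 := by
  have hsum : ∑ i, ∑ j, X i j * X i j = 0 := by
    simpa [trace, Matrix.mul_apply, Matrix.diag] using h
  ext i j
  have h1 : ∀ i ∈ Finset.univ, (0:ℝ) ≤ ∑ j, X i j * X i j := fun i _ =>
    Finset.sum_nonneg fun j _ => mul_self_nonneg _
  have h2 : ∑ j, X i j * X i j = 0 :=
    (Finset.sum_eq_zero_iff_of_nonneg h1).1 hsum i (Finset.mem_univ i)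
  have h3 : X i j * X i j = 0 :=
    (Finset.sum_eq_zero_iff_of_nonneg (fun j _ => mul_self_nonneg _)).1 h2 j (Finset.mem_univ j)
  simpa using mul_self_eq_zero.1 h3

lemma aux_trace_id (A T N P G : Matrix n n ℝ)
    (hG : G = N - P) (hTG : T * G = P) (hGT : G * T = P)
    (hTP : T * P = 1 - P) (hPT : P * T = 1 - P) :
    trace ((A*T - T*A) * G * (T*A - A*T) * G)
      = 2*(trace (A*N*A*(T*P)) - trace (A*A*P)) := by
  have hswap : ∀ X Y : Matrix n n ℝ, trace (A*X*A*Y) = trace (A*Y*A*X) := by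
    intro X Y
    rw [mul_assoc (A*X) A Y, trace_mul_comm, ← mul_assoc]
  have hcyc3 : ∀ X : Matrix n n ℝ, trace (A*X*A) = trace (A*A*X) := fun X =>
    trace_mul_cycle A X A
  have e1 : trace (A*T*G*(T*A)*G)
      = trace (A*N*A) - trace (A*N*A*P) - trace (A*A*P) + trace (A*P*A*P) := by
    have m1 : A*T*G = A*P := by rw [mul_assoc, hTG]
    have m2 : A*P*(T*A)*G = A*A*N - A*A*P - (A*P*A*N - A*P*A*P) := by
      rw [show A*P*(T*A)*G = (A*(P*T)*A)*G from by noncomm_ring, hPT, hG]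
      noncomm_ring
    rw [m1, m2, trace_sub, trace_sub, trace_sub, hswap P N, ← hcyc3 N]
    ring_nf
  have e2 : trace (A*T*G*(A*T)*G) = trace (A*P*A*P) := by
    have m1 : A*T*G = A*P := by rw [mul_assoc, hTG]
    rw [m1, mul_assoc (A*P) (A*T) G, mul_assoc A T G, hTG, ← mul_assoc]
  have e3 : trace (T*A*G*(T*A)*G) = trace (A*P*A*P) := by
    rw [show T*A*G*(T*A)*G = T*(A*G*(T*A)*G) from by noncomm_ring, trace_mul_comm]
    congr 1
    rw [mul_assoc (A*G*(T*A)) G T, hGT,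
      show A*G*(T*A)*P = (A*(G*T))*A*P from by noncomm_ring, hGT]
  have e4 : trace (T*A*G*(A*T)*G)
      = trace (A*N*A) - trace (A*A*P) - trace (A*N*A*P) + trace (A*P*A*P) := by
    rw [show T*A*G*(A*T)*G = T*(A*G*(A*T)*G) from by noncomm_ring, trace_mul_comm]
    have m : A*G*(A*T)*G*T = A*N*A - A*P*A - (A*N*A*P - A*P*A*P) := by
      rw [mul_assoc (A*G*(A*T)) G T, hGT,
        show A*G*(A*T)*P = (A*G*A)*(T*P) from by noncomm_ring, hTP, hG]
      noncomm_ring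
    rw [m, trace_sub, trace_sub, trace_sub, hcyc3 P]
    ring
  have hR : A*N*A*(T*P) = A*N*A - A*N*A*P := by rw [hTP]; noncomm_ring
  rw [show (A*T - T*A) * G * (T*A - A*T) * G
      = A*T*G*(T*A)*G - A*T*G*(A*T)*G - (T*A*G*(T*A)*G - T*A*G*(A*T)*G)
      from by noncomm_ring]
  rw [trace_sub, trace_sub, trace_sub, e1, e2, e3, e4, hR, trace_sub]
  ring

lemma aux_kill (J G H K : Matrix n n ℝ) (hH : H * H = G) (hHt : Hᵀ = H)
    (hKH : K * H = 1) (hHK : H * K = 1)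
    (h0 : trace (J * G * Jᵀ * G) = 0) : J = 0 := by
  have hXt : (H*J*H)ᵀ = H*Jᵀ*H := by
    rw [transpose_mul, transpose_mul, hHt, ← mul_assoc]
  have h1 : trace ((H*J*H) * (H*J*H)ᵀ) = 0 := by
    rw [hXt, show (H*J*H)*(H*Jᵀ*H) = H*(J*(H*H)*Jᵀ*H) from by noncomm_ring, trace_mul_comm,
      show (J*(H*H)*Jᵀ*H)*H = J*(H*H)*Jᵀ*(H*H) from by noncomm_ring, hH]
    exact h0
  have hX0 : H*J*H = 0 := aux_trace_transpose_zero _ h1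
  have h2 : K*(H*J*H)*K = J := by
    rw [show K*(H*J*H)*K = (K*H)*J*(H*K) from by noncomm_ring, hKH, hHK, one_mul, mul_one]
  rw [← h2, hX0, mul_zero, zero_mul]

end AuxLemmas

namespace Matrix.PosSemidef

open scoped MatrixOrder in
lemma aux_exists_sqrt {n : Type*} [Fintype n] [DecidableEq n] {A : Matrix n n ℝ}
    (hA : A.PosSemidef) : ∃ C : Matrix n n ℝ, C.PosSemidef ∧ C * C = A :=
  ⟨CFC.sqrt A, (CFC.sqrt_nonneg A).posSemidef, CFC.sqrt_mul_sqrt_self A hA.nonneg⟩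

noncomputable def sqrt {n : Type*} [Fintype n] [DecidableEq n] {A : Matrix n n ℝ}
    (hA : A.PosSemidef) : Matrix n n ℝ :=
  Classical.choose hA.aux_exists_sqrt

lemma posSemidef_sqrt {n : Type*} [Fintype n] [DecidableEq n] {A : Matrix n n ℝ}
    (hA : A.PosSemidef) : hA.sqrt.PosSemidef :=
  (Classical.choose_spec hA.aux_exists_sqrt).1

lemma sqrt_mul_self {n : Type*} [Fintype n] [DecidableEq n] {A : Matrix n n ℝ}
    (hA : A.PosSemidef) : hA.sqrt * hA.sqrt = A :=
  (Classical.choose_spec hA.aux_exists_sqrt).2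

end Matrix.PosSemidef


/-- A square matrix is irreducible if there is no nonempty proper subset `S` of the index set
with `A i j = 0` for all `i ∈ S` and `j ∉ S`. -/
def MatrixIrreducible {L : ℕ} (A : Matrix (Fin L) (Fin L) ℝ) : Prop :=
  ¬ ∃ S : Finset (Fin L), S.Nonempty ∧ S ≠ Finset.univ ∧
      ∀ i ∈ S, ∀ j ∉ S, A i j = 0

/-- assume `B` is irreducible and the real symmetric matrix `M` with
`0 ≺ M ≺ B` solves the matrix Dyson equation at `z = 1`. Then the kernel of
`Q := I − Diag(√λ)(B⊙M)Diag(√λ)` is one-dimensional, spanned by the nonzero vector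
`w := √λ ⊙ (𝟙 − diag M)`. -/
theorem stmt9 {L : ℕ} (hL : 0 < L) (lam : Fin L → ℝ) (hlam : ∀ l, 0 < lam l)
    (B : Matrix (Fin L) (Fin L) ℝ) (hB : B.PosDef) (hBdiag : ∀ l, B l l = 1)
    (hIrr : MatrixIrreducible B)
    (M : Matrix (Fin L) (Fin L) ℝ) (hMsym : Mᵀ = M)
    (hM : M.PosDef) (hBM : (B - M).PosDef)
    (hMDE : M⁻¹ = B⁻¹ + Matrix.diagonal lam - Matrix.diagonal (fun l => lam l * M l l))
    (Q : Matrix (Fin L) (Fin L) ℝ)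
    (hQ : Q = (1 : Matrix (Fin L) (Fin L) ℝ)
        - Matrix.diagonal (fun l => Real.sqrt (lam l)) * Matrix.hadamard B M *
            Matrix.diagonal (fun l => Real.sqrt (lam l)))
    (w : Fin L → ℝ) (hw : w = fun l => Real.sqrt (lam l) * (1 - M l l)) :
    w ≠ 0 ∧ ∀ v : Fin L → ℝ, Q *ᵥ v = 0 ↔ ∃ c : ℝ, v = c • w := by
  have hBsym : Bᵀ = B := by
    rw [← Matrix.conjTranspose_eq_transpose_of_trivial]; exact hB.1
  have hMs : ∀ a b, M a b = M b a := by
    intro a b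
    conv_lhs => rw [← hMsym]
    rfl
  have hs : ∀ l, 0 < Real.sqrt (lam l) := fun l => Real.sqrt_pos.2 (hlam l)
  have hs2 : ∀ l, Real.sqrt (lam l) * Real.sqrt (lam l) = lam l :=
    fun l => Real.mul_self_sqrt (hlam l).le
  have hMll : ∀ l, 0 < 1 - M l l := by
    intro l
    have h1 : (Pi.single l 1 : Fin L → ℝ) ≠ 0 := by
      intro h; have := congrFun h l; simp at this
    have h2 := hBM.dotProduct_mulVec_pos h1
    simpa [Matrix.mulVec_single, single_dotProduct, Matrix.sub_apply, hBdiag l] using h2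
  set d : Fin L → ℝ := fun l => lam l * (1 - M l l) with hd_def
  have hd : ∀ l, 0 < d l := fun l => mul_pos (hlam l) (hMll l)
  set D := Matrix.diagonal d with hD_def
  have hMDE' : M⁻¹ = B⁻¹ + D := by
    rw [hMDE, add_sub_assoc, Matrix.diagonal_sub, hD_def]
    have he : (fun i => lam i - lam i * M i i) = d := by
      funext l
      show lam l - lam l * M l l = lam l * (1 - M l l)
      ring
    rw [he]
  have hBu : IsUnit B.det := isUnit_iff_ne_zero.2 hB.det_pos.ne'
  have hMu : IsUnit M.det := isUnit_iff_ne_zero.2 hM.det_pos.ne'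
  have key1 : B = M + B * D * M := by
    have h1 : B * M⁻¹ * M = B := by
      rw [mul_assoc, Matrix.nonsing_inv_mul M hMu, mul_one]
    calc B = B * M⁻¹ * M := h1.symm
      _ = B * (B⁻¹ + D) * M := by rw [hMDE']
      _ = M + B * D * M := by
          rw [mul_add, Matrix.mul_nonsing_inv B hBu, add_mul, one_mul]
  have key2 : B = M + M * D * B := by
    have h := congrArg Matrix.transpose key1
    rw [Matrix.transpose_add, hBsym, Matrix.transpose_mul, Matrix.transpose_mul, hMsym,
      Matrix.diagonal_transpose, hBsym, ← mul_assoc] at h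
    exact h
  have hdiagKey : ∀ i, 1 - M i i = (B * D * M) i i := by
    intro i
    have h := congrFun (congrFun key1 i) i
    rw [Matrix.add_apply, hBdiag i] at h
    linarith
  have hsw : ∀ j, Real.sqrt (lam j) * w j = d j := by
    intro j; rw [hw, hd_def]; simp only []
    linear_combination (1 - M j j) * hs2 j
  have hXentry : ∀ i j, (Matrix.diagonal (fun l => Real.sqrt (lam l)) * Matrix.hadamard B M *
      Matrix.diagonal (fun l => Real.sqrt (lam l))) i j
      = Real.sqrt (lam i) * (B i j * M i j) * Real.sqrt (lam j) := by
    intro i j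
    rw [Matrix.mul_diagonal, Matrix.diagonal_mul, Matrix.hadamard_apply]
  have hQw : Q *ᵥ w = 0 := by
    funext i
    rw [hQ, Matrix.sub_mulVec, Matrix.one_mulVec]
    simp only [Pi.sub_apply, Pi.zero_apply]
    have hrow : ((Matrix.diagonal (fun l => Real.sqrt (lam l)) * Matrix.hadamard B M *
        Matrix.diagonal (fun l => Real.sqrt (lam l))) *ᵥ w) i
        = Real.sqrt (lam i) * ((B * D * M) i i) := by
      calc ((Matrix.diagonal (fun l => Real.sqrt (lam l)) * Matrix.hadamard B M *
          Matrix.diagonal (fun l => Real.sqrt (lam l))) *ᵥ w) i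
          = ∑ j, Real.sqrt (lam i) * (B i j * M i j) * Real.sqrt (lam j) * w j := by
            simp only [Matrix.mulVec, dotProduct, hXentry]
        _ = ∑ j, Real.sqrt (lam i) * (B i j * d j * M j i) := by
            refine Finset.sum_congr rfl fun j _ => ?_
            rw [hMs i j]
            linear_combination (Real.sqrt (lam i) * (B i j * M j i)) * hsw j
        _ = Real.sqrt (lam i) * ((B * D * M) i i) := by
            rw [Matrix.mul_apply, Finset.mul_sum]
            refine Finset.sum_congr rfl fun j _ => ?_
            rw [Matrix.mul_diagonal]
    rw [hrow, ← hdiagKey i, hw]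
    simp only []
    ring
  constructor
  · intro h0
    rw [hw] at h0
    have h1 := congrFun h0 ⟨0, hL⟩
    simp only [Pi.zero_apply] at h1
    exact absurd h1 (mul_pos (hs ⟨0, hL⟩) (hMll ⟨0, hL⟩)).ne'
  intro v
  constructor
  · intro hv
    set y : Fin L → ℝ := fun i => Real.sqrt (lam i) * v i with hy_def
    set Y := Matrix.diagonal y with hY_def
    set C := hB.posSemidef.sqrt with hC_def
    have hC2 : C * C = B := hB.posSemidef.sqrt_mul_self
    have hCsd : C.PosSemidef := hB.posSemidef.posSemidef_sqrt
    have hCt : Cᵀ = C := by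
      rw [← Matrix.conjTranspose_eq_transpose_of_trivial]; exact hCsd.1
    have hCdet : IsUnit C.det := by
      refine isUnit_iff_ne_zero.2 fun h0 => ?_
      have h : C.det * C.det = B.det := by rw [← Matrix.det_mul, hC2]
      rw [h0, mul_zero] at h
      exact hB.det_pos.ne' h.symm
    have hCi1 : C * C⁻¹ = 1 := Matrix.mul_nonsing_inv C hCdet
    have hCi2 : C⁻¹ * C = 1 := Matrix.nonsing_inv_mul C hCdet
    set E := Matrix.diagonal (fun i => (d i)⁻¹) with hE_def
    have hDE : D * E = 1 := by
      rw [hD_def, hE_def, Matrix.diagonal_mul_diagonal,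
        show (fun i => d i * (d i)⁻¹) = fun _ => (1:ℝ) from
          funext fun i => mul_inv_cancel₀ (hd i).ne', Matrix.diagonal_one]
    have hED : E * D = 1 := by
      rw [hD_def, hE_def, Matrix.diagonal_mul_diagonal,
        show (fun i => (d i)⁻¹ * d i) = fun _ => (1:ℝ) from
          funext fun i => inv_mul_cancel₀ (hd i).ne', Matrix.diagonal_one]
    set T := C * D * C with hT_def
    set P := C⁻¹ * M * C⁻¹ with hP_def
    set N := C⁻¹ * E * C⁻¹ with hN_def
    have hTN : T * N = 1 := by
      rw [hT_def, hN_def,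
        show C*D*C*(C⁻¹*E*C⁻¹) = C*D*(C*C⁻¹)*(E*C⁻¹) from by noncomm_ring, hCi1, mul_one,
        show C*D*(E*C⁻¹) = C*(D*E)*C⁻¹ from by noncomm_ring, hDE, mul_one, hCi1]
    have hNT : N * T = 1 := by
      rw [hN_def, hT_def,
        show C⁻¹*E*C⁻¹*(C*D*C) = C⁻¹*E*(C⁻¹*C)*(D*C) from by noncomm_ring, hCi2, mul_one,
        show C⁻¹*E*(D*C) = C⁻¹*(E*D)*C from by noncomm_ring, hED, mul_one, hCi2]
    have hCBC : C⁻¹ * B * C⁻¹ = 1 := by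
      rw [← hC2, show C⁻¹*(C*C)*C⁻¹ = (C⁻¹*C)*(C*C⁻¹) from by noncomm_ring, hCi1, hCi2, one_mul]
    have hTP : T * P = 1 - P := by
      have e : (1:Matrix (Fin L) (Fin L) ℝ) = P + C*D*M*C⁻¹ := by
        calc (1:Matrix (Fin L) (Fin L) ℝ) = C⁻¹ * B * C⁻¹ := hCBC.symm
          _ = C⁻¹ * (M + B*D*M) * C⁻¹ := by rw [← key1]
          _ = P + C⁻¹*(B*D*M)*C⁻¹ := by rw [hP_def]; noncomm_ring
          _ = P + C*D*M*C⁻¹ := by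
              rw [← hC2, show C⁻¹*(C*C*D*M)*C⁻¹ = (C⁻¹*C)*(C*D*M*C⁻¹) from by noncomm_ring,
                hCi2, one_mul]
      have e2 : C*D*M*C⁻¹ = 1 - P := by rw [e]; abel
      rw [hT_def, hP_def,
        show C*D*C*(C⁻¹*M*C⁻¹) = C*D*(C*C⁻¹)*(M*C⁻¹) from by noncomm_ring, hCi1, mul_one,
        show C*D*(M*C⁻¹) = C*D*M*C⁻¹ from by noncomm_ring, e2]
    have hPT : P * T = 1 - P := by
      have e : (1:Matrix (Fin L) (Fin L) ℝ) = P + C⁻¹*M*D*C := by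
        calc (1:Matrix (Fin L) (Fin L) ℝ) = C⁻¹ * B * C⁻¹ := hCBC.symm
          _ = C⁻¹ * (M + M*D*B) * C⁻¹ := by rw [← key2]
          _ = P + C⁻¹*(M*D*B)*C⁻¹ := by rw [hP_def]; noncomm_ring
          _ = P + C⁻¹*M*D*C := by
              rw [← hC2, show C⁻¹*(M*D*(C*C))*C⁻¹ = (C⁻¹*M*D*C)*(C*C⁻¹) from by noncomm_ring,
                hCi1, mul_one]
      have e2 : C⁻¹*M*D*C = 1 - P := by rw [e]; abel
      rw [hP_def, hT_def,
        show C⁻¹*M*C⁻¹*(C*D*C) = C⁻¹*M*(C⁻¹*C)*(D*C) from by noncomm_ring, hCi2, mul_one,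
        show C⁻¹*M*(D*C) = C⁻¹*M*D*C from by noncomm_ring, e2]
    have hNP : N * P = N - P := by
      have h : N * (T * P) = P := by rw [← mul_assoc, hNT, one_mul]
      rw [hTP, mul_sub, mul_one] at h
      calc N*P = N - (N - N*P) := by abel
        _ = N - P := by rw [h]
    have hTG : T * (N * P) = P := by rw [← mul_assoc, hTN, one_mul]
    have hGT : (N * P) * T = P := by
      rw [mul_assoc, hPT, mul_sub, mul_one, hNP]; abel
    set A := C * Y * C with hA_def
    have hAt : Aᵀ = A := by
      rw [hA_def, hY_def, Matrix.transpose_mul, Matrix.transpose_mul, hCt,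
        Matrix.diagonal_transpose, ← mul_assoc]
    have hTt : Tᵀ = T := by
      rw [hT_def, hD_def, Matrix.transpose_mul, Matrix.transpose_mul, hCt,
        Matrix.diagonal_transpose, ← mul_assoc]
    have hAAP : Matrix.trace (A*A*P) = Matrix.trace (Y*B*Y*M) := by
      have m : A*A*P = C*(Y*B*Y*(M*C⁻¹)) := by
        rw [hA_def, hP_def, ← hC2,
          show C*Y*C*(C*Y*C)*(C⁻¹*M*C⁻¹) = C*(Y*(C*C)*Y*((C*C⁻¹)*(M*C⁻¹))) from by noncomm_ring,
          hCi1, one_mul]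
      rw [m, Matrix.trace_mul_comm C (Y*B*Y*(M*C⁻¹)),
        show Y*B*Y*(M*C⁻¹)*C = Y*B*Y*(M*(C⁻¹*C)) from by noncomm_ring, hCi2, mul_one]
    have hANATP : Matrix.trace (A*N*A*(T*P)) = Matrix.trace (Y*E*Y*(B*D*M)) := by
      have m : A*N*A*(T*P) = C*(Y*E*Y*(B*D*M)*C⁻¹) := by
        rw [hA_def, hN_def, hT_def, hP_def, ← hC2,
          show C*Y*C*(C⁻¹*E*C⁻¹)*(C*Y*C)*(C*D*C*(C⁻¹*M*C⁻¹))
            = C*(Y*((C*C⁻¹)*(E*((C⁻¹*C)*(Y*((C*C)*(D*((C*C⁻¹)*(M*C⁻¹)))))))))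
            from by noncomm_ring, hCi1, hCi2]
        simp only [one_mul]
        noncomm_ring
      rw [m, Matrix.trace_mul_comm C (Y*E*Y*(B*D*M)*C⁻¹), mul_assoc, hCi2, mul_one]
    have hsum1 : Matrix.trace (Y*E*Y*(B*D*M)) = v ⬝ᵥ v := by
      have hYEY : Y*E*Y = Matrix.diagonal (fun i => y i * (d i)⁻¹ * y i) := by
        rw [hY_def, hE_def, Matrix.diagonal_mul_diagonal, Matrix.diagonal_mul_diagonal]
      have t1 : Matrix.trace (Matrix.diagonal (fun i => y i * (d i)⁻¹ * y i) * (B*D*M))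
          = ∑ i, (y i * (d i)⁻¹ * y i) * ((B*D*M) i i) := by
        simp [Matrix.trace, Matrix.diag, Matrix.diagonal_mul]
      rw [hYEY, t1]
      simp only [dotProduct]
      refine Finset.sum_congr rfl fun i _ => ?_
      rw [← hdiagKey i]
      have hyy : y i * y i = lam i * (v i * v i) := by
        rw [hy_def]
        simp only []
        linear_combination (v i * v i) * hs2 i
      have hdinv : (d i)⁻¹ * (1 - M i i) = (lam i)⁻¹ := by
        rw [hd_def]
        simp only []
        rw [mul_inv, mul_assoc, inv_mul_cancel₀ (hMll i).ne', mul_one]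
      calc y i * (d i)⁻¹ * y i * (1 - M i i) = (y i * y i) * ((d i)⁻¹ * (1 - M i i)) := by ring
        _ = lam i * (v i * v i) * (lam i)⁻¹ := by rw [hyy, hdinv]
        _ = v i * v i := by
            rw [mul_comm (lam i) (v i * v i), mul_assoc, mul_inv_cancel₀ (hlam i).ne', mul_one]
    have hsum2 : Matrix.trace (Y*B*Y*M) = v ⬝ᵥ ((Matrix.diagonal (fun l => Real.sqrt (lam l)) *
        Matrix.hadamard B M * Matrix.diagonal (fun l => Real.sqrt (lam l))) *ᵥ v) := by
      have hYBY : ∀ i j, (Y*B*Y) i j = y i * B i j * y j := by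
        intro i j; rw [hY_def, Matrix.mul_diagonal, Matrix.diagonal_mul]
      have lhs : Matrix.trace (Y*B*Y*M) = ∑ i, ∑ j, y i * B i j * y j * M j i := by
        calc Matrix.trace (Y*B*Y*M) = ∑ i, ∑ j, (Y*B*Y) i j * M j i := by
              simp [Matrix.trace, Matrix.diag, Matrix.mul_apply]
          _ = ∑ i, ∑ j, y i * B i j * y j * M j i := by
              refine Finset.sum_congr rfl fun i _ => Finset.sum_congr rfl fun j _ => ?_
              rw [hYBY]
      have rhs : v ⬝ᵥ ((Matrix.diagonal (fun l => Real.sqrt (lam l)) *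
          Matrix.hadamard B M * Matrix.diagonal (fun l => Real.sqrt (lam l))) *ᵥ v)
          = ∑ i, ∑ j, v i * (Real.sqrt (lam i) * (B i j * M i j) * Real.sqrt (lam j) * v j) := by
        simp only [dotProduct, Matrix.mulVec, hXentry, Finset.mul_sum]
      rw [lhs, rhs]
      refine Finset.sum_congr rfl fun i _ => Finset.sum_congr rfl fun j _ => ?_
      have hyi : y i = Real.sqrt (lam i) * v i := by rw [hy_def]
      have hyj : y j = Real.sqrt (lam j) * v j := by rw [hy_def]
      rw [hyi, hyj, hMs j i]
      ring
    have hQv0 : v ⬝ᵥ (Q *ᵥ v) = 0 := by rw [hv, dotProduct_zero]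
    rw [hQ, Matrix.sub_mulVec, Matrix.one_mulVec, dotProduct_sub] at hQv0
    have qf : Matrix.trace (A*N*A*(T*P)) - Matrix.trace (A*A*P) = 0 := by
      rw [hANATP, hAAP, hsum1, hsum2]
      linarith [hQv0]
    have hDpd : D.PosDef := by rw [hD_def]; exact Matrix.PosDef.diagonal hd
    have hDh : Dᴴ = D := hDpd.1
    have hDBD : (D*B*D).PosDef := by
      have h := aux_posdef_conj B D hB hDpd.isUnit
      rwa [hDh] at h
    have hMidpd : (D + D*B*D).PosDef := aux_posdef_add hDpd hDBD
    have hCh : Cᴴ = C := hCsd.1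
    have hCunit : IsUnit C := (Matrix.isUnit_iff_isUnit_det C).2 hCdet
    have hWpd : (T + T*T).PosDef := by
      have h := aux_posdef_conj (D + D*B*D) C hMidpd hCunit
      rw [hCh] at h
      have e : C * (D + D*B*D) * C = T + T*T := by
        rw [hT_def, ← hC2]; noncomm_ring
      rwa [e] at h
    have hGW2 : (T + T*T) * (N*P) = 1 := by
      rw [add_mul, hTG, mul_assoc T T (N*P), hTG, hTP]; abel
    have hGpd : (N*P).PosDef := by
      have e : (T + T*T)⁻¹ = N*P := Matrix.inv_eq_right_inv hGW2
      rw [← e]; exact hWpd.inv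
    have hHH : hGpd.posSemidef.sqrt * hGpd.posSemidef.sqrt = N*P := hGpd.posSemidef.sqrt_mul_self
    have hHt : (hGpd.posSemidef.sqrt)ᵀ = hGpd.posSemidef.sqrt := by
      rw [← Matrix.conjTranspose_eq_transpose_of_trivial]
      exact (hGpd.posSemidef.posSemidef_sqrt).1
    have hHdet : IsUnit (hGpd.posSemidef.sqrt).det := by
      refine isUnit_iff_ne_zero.2 fun h0 => ?_
      have h : (hGpd.posSemidef.sqrt).det * (hGpd.posSemidef.sqrt).det = (N*P).det := by
        rw [← Matrix.det_mul, hHH]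
      rw [h0, mul_zero] at h
      exact hGpd.det_pos.ne' h.symm
    have hKH : (hGpd.posSemidef.sqrt)⁻¹ * hGpd.posSemidef.sqrt = 1 :=
      Matrix.nonsing_inv_mul _ hHdet
    have hHK : hGpd.posSemidef.sqrt * (hGpd.posSemidef.sqrt)⁻¹ = 1 :=
      Matrix.mul_nonsing_inv _ hHdet
    have htr0 : Matrix.trace ((A*T - T*A) * (N*P) * (A*T - T*A)ᵀ * (N*P)) = 0 := by
      have hJt : (A*T - T*A)ᵀ = T*A - A*T := by
        rw [Matrix.transpose_sub, Matrix.transpose_mul A T, Matrix.transpose_mul T A, hAt, hTt]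
      rw [hJt, aux_trace_id A T N P (N*P) hNP hTG hGT hTP hPT, qf, mul_zero]
    have hJ0 : A*T - T*A = 0 :=
      aux_kill (A*T - T*A) (N*P) hGpd.posSemidef.sqrt (hGpd.posSemidef.sqrt)⁻¹
        hHH hHt hKH hHK htr0
    have hATTA : A*T = T*A := sub_eq_zero.mp hJ0
    have e1 : A*T = C*(Y*B*D)*C := by rw [hA_def, hT_def, ← hC2]; noncomm_ring
    have e2 : T*A = C*(D*B*Y)*C := by rw [hA_def, hT_def, ← hC2]; noncomm_ring
    have hYBD : Y*B*D = D*B*Y := by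
      have h := hATTA
      rw [e1, e2] at h
      calc Y*B*D = (C⁻¹*C)*(Y*B*D)*(C*C⁻¹) := by rw [hCi1, hCi2, one_mul, mul_one]
        _ = C⁻¹*(C*(Y*B*D)*C)*C⁻¹ := by noncomm_ring
        _ = C⁻¹*(C*(D*B*Y)*C)*C⁻¹ := by rw [h]
        _ = (C⁻¹*C)*(D*B*Y)*(C*C⁻¹) := by noncomm_ring
        _ = D*B*Y := by rw [hCi1, hCi2, one_mul, mul_one]
    have hentry : ∀ i j, y i * B i j * d j = d i * B i j * y j := by
      intro i j
      have h := congrFun (congrFun hYBD i) j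
      have hl : (Y*B*D) i j = y i * B i j * d j := by
        rw [hY_def, hD_def, Matrix.mul_diagonal, Matrix.diagonal_mul]
      have hr : (D*B*Y) i j = d i * B i j * y j := by
        rw [hY_def, hD_def, Matrix.mul_diagonal, Matrix.diagonal_mul]
      rw [hl, hr] at h
      exact h
    have hall : ∀ i, y i * d (⟨0, hL⟩ : Fin L) = y ⟨0, hL⟩ * d i := by
      by_contra hcon
      push_neg at hcon
      obtain ⟨i1, hi1⟩ := hcon
      refine hIrr ⟨Finset.univ.filter
        (fun i => y i * d (⟨0, hL⟩ : Fin L) = y ⟨0, hL⟩ * d i), ⟨⟨0, hL⟩, ?_⟩, ?_, ?_⟩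
      · simp
      · intro hS
        apply hi1
        have hmem : i1 ∈ Finset.univ.filter
            (fun i => y i * d (⟨0, hL⟩ : Fin L) = y ⟨0, hL⟩ * d i) := by
          rw [hS]; exact Finset.mem_univ i1
        exact (Finset.mem_filter.1 hmem).2
      · intro i hi j hj
        rw [Finset.mem_filter] at hi
        by_contra hBij
        apply hj
        rw [Finset.mem_filter]
        refine ⟨Finset.mem_univ j, ?_⟩
        have e := hentry i j
        have e' : y i * d j = d i * y j := by
          refine mul_right_cancel₀ hBij ?_
          linear_combination e
        apply mul_left_cancel₀ (hd i).ne'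
        calc d i * (y j * d (⟨0, hL⟩ : Fin L)) = (d i * y j) * d ⟨0, hL⟩ := by ring
          _ = (y i * d j) * d ⟨0, hL⟩ := by rw [e']
          _ = (y i * d ⟨0, hL⟩) * d j := by ring
          _ = (y ⟨0, hL⟩ * d i) * d j := by rw [hi.2]
          _ = d i * (y ⟨0, hL⟩ * d j) := by ring
    refine ⟨y ⟨0, hL⟩ / d ⟨0, hL⟩, ?_⟩
    funext i
    have h1 : y i = (y ⟨0, hL⟩ / d ⟨0, hL⟩) * d i := by
      rw [div_mul_eq_mul_div, eq_div_iff (hd (⟨0, hL⟩ : Fin L)).ne']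
      exact hall i
    have h2 : Real.sqrt (lam i) * v i
        = Real.sqrt (lam i) * ((y ⟨0, hL⟩ / d ⟨0, hL⟩) * w i) := by
      have hyv : y i = Real.sqrt (lam i) * v i := by rw [hy_def]
      rw [← hyv, h1, hw, hd_def]
      simp only []
      linear_combination (y ⟨0, hL⟩ / d ⟨0, hL⟩ * (1 - M i i)) * (hs2 i).symm
    have h3 := mul_left_cancel₀ (hs i).ne' h2
    rw [Pi.smul_apply, smul_eq_mul]
    exact h3
  · rintro ⟨c, rfl⟩
    rw [Matrix.mulVec_smul, hQw, smul_zero]
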